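/- arXiv:2106.07736 — 2 statements merged into one kernel-verified Lean document; each statement's English description precedes it below -/
import Mathlib

section
/- There exists an absolute constant C > 0 with the following property. Assume 0 < θ ≤ 1/9 and C⋆ ≥ 1/5, and suppose sup over unit q of ‖grad F(q) − grad f(q)‖₂ ≤ δ₁ with δ₁ ≤ 5×10⁻⁵ and sup over unit q of ‖Hess F(q) − Hess f(q)‖_op ≤ δ₂ with δ₂ ≤ 10⁻³. Let q ∈ ℝ^p be a unit vector with grad F(q) = 0 and ‖Aᵀq‖_∞² ≥ C⋆; write ζ = Aᵀq and b = max over j of |⟨grad f(q) − grad F(q), a_j⟩|. If there exists an index i such that |ζ_i| ≥ √(α(q)) − 2b/α(q) and |ζ_j| ≤ 2b/α(q) for all j ≠ i, then for some sign s ∈ {+1,−1} one has ‖q − s·a_i‖₂² ≤ C·δ₁, and moreover vᵀ Hess F(q) v > 0 for every unit vector v with vᵀq = 0. -/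
open Matrix MeasureTheory ProbabilityTheory Real
open scoped BigOperators ENNReal

noncomputable section

/-- squared Euclidean norm -/
def l2sq {m : ℕ} (v : Fin m → ℝ) : ℝ := ∑ i, v i ^ 2

/-- fourth power of the ℓ₄ norm -/
def l4p4 {m : ℕ} (v : Fin m → ℝ) : ℝ := ∑ i, v i ^ 4

/-- Euclidean norm -/
def l2norm {m : ℕ} (v : Fin m → ℝ) : ℝ := Real.sqrt (l2sq v)

/-- squared sup-norm -/
def linfSq {m : ℕ} (v : Fin m → ℝ) : ℝ := ⨆ i, (v i) ^ 2

/-- projection onto the orthogonal complement of q -/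
def proj {p : ℕ} (q : Fin p → ℝ) : Matrix (Fin p) (Fin p) ℝ := 1 - Matrix.vecMulVec q q

def zeta {p r : ℕ} (A : Matrix (Fin p) (Fin r) ℝ) (q : Fin p → ℝ) : Fin r → ℝ := Aᵀ *ᵥ q

/-- population objective -/
def fpop {p r : ℕ} (θ : ℝ) (A : Matrix (Fin p) (Fin r) ℝ) (q : Fin p → ℝ) : ℝ :=
  -(1/4) * ((1 - θ) * l4p4 (zeta A q) + θ * (l2sq (zeta A q)) ^ 2)

/-- Riemannian gradient of the population objective -/
def gradf {p r : ℕ} (θ : ℝ) (A : Matrix (Fin p) (Fin r) ℝ) (q : Fin p → ℝ) : Fin p → ℝ :=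
  -((proj q) *ᵥ ((1 - θ) • (A *ᵥ fun j => (zeta A q j) ^ 3)
      + (θ * l2sq (zeta A q)) • (A *ᵥ zeta A q)))

/-- Riemannian Hessian of the population objective -/
def hessf {p r : ℕ} (θ : ℝ) (A : Matrix (Fin p) (Fin r) ℝ) (q : Fin p → ℝ) :
    Matrix (Fin p) (Fin p) ℝ :=
  -((1 - θ) • (proj q *
      ((3 : ℝ) • (A * Matrix.diagonal (fun j => (zeta A q j) ^ 2) * Aᵀ)
        - l4p4 (zeta A q) • (1 : Matrix (Fin p) (Fin p) ℝ)) * proj q))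
  - θ • (proj q *
      (l2sq (zeta A q) • (A * Aᵀ)
        + (2 : ℝ) • (A * Aᵀ * Matrix.vecMulVec q q * (A * Aᵀ))
        - (l2sq (zeta A q)) ^ 2 • (1 : Matrix (Fin p) (Fin p) ℝ)) * proj q)

/-- quadratic form -/
def qform {p : ℕ} (M : Matrix (Fin p) (Fin p) ℝ) (v : Fin p → ℝ) : ℝ := v ⬝ᵥ (M *ᵥ v)

/-- α(q) -/
def alphaf {p r : ℕ} (θ : ℝ) (A : Matrix (Fin p) (Fin r) ℝ) (q : Fin p → ℝ) : ℝ :=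
  l4p4 (zeta A q) + (θ / (1 - θ)) * ((l2sq (zeta A q)) ^ 2 - l2sq (zeta A q))

/-- columns of X -/
def colX {r n : ℕ} (X : Matrix (Fin r) (Fin n) ℝ) (k : Fin n) : Fin r → ℝ := fun i => X i k

/-- finite-sample objective -/
def Ffun {p r n : ℕ} (θ σ : ℝ) (A : Matrix (Fin p) (Fin r) ℝ) (X : Matrix (Fin r) (Fin n) ℝ)
    (q : Fin p → ℝ) : ℝ :=
  -(1 / (12 * θ * σ ^ 4 * n)) * ∑ k : Fin n, (q ⬝ᵥ (A *ᵥ colX X k)) ^ 4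

/-- Riemannian gradient of the finite-sample objective -/
def gradF {p r n : ℕ} (θ σ : ℝ) (A : Matrix (Fin p) (Fin r) ℝ) (X : Matrix (Fin r) (Fin n) ℝ)
    (q : Fin p → ℝ) : Fin p → ℝ :=
  (-(1 / (3 * θ * σ ^ 4 * n))) •
    ((proj q) *ᵥ ∑ k : Fin n, ((q ⬝ᵥ (A *ᵥ colX X k)) ^ 3) • (A *ᵥ colX X k))

/-- Riemannian Hessian of the finite-sample objective -/
def hessF {p r n : ℕ} (θ σ : ℝ) (A : Matrix (Fin p) (Fin r) ℝ) (X : Matrix (Fin r) (Fin n) ℝ)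
    (q : Fin p → ℝ) : Matrix (Fin p) (Fin p) ℝ :=
  (-(1 / (3 * θ * σ ^ 4 * n))) •
    ∑ k : Fin n, proj q *
      ((3 * (q ⬝ᵥ (A *ᵥ colX X k)) ^ 2) • Matrix.vecMulVec (A *ᵥ colX X k) (A *ᵥ colX X k)
        - ((q ⬝ᵥ (A *ᵥ colX X k)) ^ 4) • (1 : Matrix (Fin p) (Fin p) ℝ)) * proj q

/-- spectral norm of a rectangular matrix -/
def opNorm {m n : ℕ} (M : Matrix (Fin m) (Fin n) ℝ) : ℝ :=
  ‖LinearMap.toContinuousLinearMap (Matrix.toEuclideanLin M)‖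

/-- Bernoulli(θ) law on ℝ -/
def bernoulliReal (θ : ℝ) : Measure ℝ :=
  ENNReal.ofReal θ • Measure.dirac (1 : ℝ) + ENNReal.ofReal (1 - θ) • Measure.dirac (0 : ℝ)

/-- Bernoulli–Gaussian law BG(θ, σ²) on ℝ -/
def bgLaw (θ σ2 : ℝ) : Measure ℝ :=
  ((bernoulliReal θ).prod (gaussianReal 0 σ2.toNNReal)).map fun p => p.1 * p.2

/-- law of a random vector in ℝ^r with i.i.d. BG(θ, σ²) entries -/
def bgVec (r : ℕ) (θ σ2 : ℝ) : Measure (Fin r → ℝ) :=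
  Measure.pi fun _ : Fin r => bgLaw θ σ2

/-- law of a random r×n matrix with i.i.d. BG(θ, σ²) entries -/
def bgMatrix (r n : ℕ) (θ σ2 : ℝ) : Measure (Fin r → Fin n → ℝ) :=
  Measure.pi fun _ : Fin r => Measure.pi fun _ : Fin n => bgLaw θ σ2


section Helpers

open Matrix

variable {p r : ℕ} {A : Matrix (Fin p) (Fin r) ℝ}

lemma cs_dot {m : ℕ} (x y : Fin m → ℝ) : (x ⬝ᵥ y)^2 ≤ l2sq x * l2sq y := by
  simpa [dotProduct, l2sq] using Finset.sum_mul_sq_le_sq_mul_sq Finset.univ x y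

lemma l2sq_nonneg {m : ℕ} (x : Fin m → ℝ) : 0 ≤ l2sq x :=
  Finset.sum_nonneg fun _ _ => sq_nonneg _

lemma dot_self_eq_l2sq {m : ℕ} (x : Fin m → ℝ) : x ⬝ᵥ x = l2sq x := by
  simp [dotProduct, l2sq, sq]

lemma At_mulVec_A (hA : Aᵀ * A = 1) (x : Fin r → ℝ) : Aᵀ *ᵥ (A *ᵥ x) = x := by
  rw [Matrix.mulVec_mulVec, hA, Matrix.one_mulVec]

lemma dot_mulVec_eq (y : Fin p → ℝ) (x : Fin r → ℝ) :
    y ⬝ᵥ (A *ᵥ x) = (Aᵀ *ᵥ y) ⬝ᵥ x := by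
  rw [Matrix.dotProduct_mulVec, Matrix.mulVec_transpose]

lemma l2sq_At_le (hA : Aᵀ * A = 1) (y : Fin p → ℝ) : l2sq (Aᵀ *ᵥ y) ≤ l2sq y := by
  set h := Aᵀ *ᵥ y with hh
  have h1 : (A *ᵥ h) ⬝ᵥ (A *ᵥ h) = l2sq h := by
    rw [dot_mulVec_eq, At_mulVec_A hA, dot_self_eq_l2sq]
  have h2 : y ⬝ᵥ (A *ᵥ h) = l2sq h := by
    rw [dot_mulVec_eq, ← hh, dot_self_eq_l2sq]
  have h3 := cs_dot y (A *ᵥ h)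
  rw [h2] at h3
  rw [show l2sq (A *ᵥ h) = (A *ᵥ h) ⬝ᵥ (A *ᵥ h) from (dot_self_eq_l2sq _).symm, h1] at h3
  nlinarith [l2sq_nonneg h, l2sq_nonneg y]

lemma vecMulVec_mulVec' (q u : Fin p → ℝ) :
    Matrix.vecMulVec q q *ᵥ u = (q ⬝ᵥ u) • q := by
  funext k
  calc (Matrix.vecMulVec q q *ᵥ u) k = ∑ l, q k * q l * u l := by
        simp [Matrix.mulVec, dotProduct, Matrix.vecMulVec_apply]
    _ = ∑ l, (q l * u l) * q k := Finset.sum_congr rfl (by intros; ring)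
    _ = (q ⬝ᵥ u) * q k := by rw [← Finset.sum_mul]; rfl
    _ = ((q ⬝ᵥ u) • q) k := rfl

lemma proj_mulVec (q u : Fin p → ℝ) : proj q *ᵥ u = u - (q ⬝ᵥ u) • q := by
  rw [proj, Matrix.sub_mulVec, Matrix.one_mulVec, vecMulVec_mulVec']

lemma mulVec_dot_col (hA : Aᵀ * A = 1) (x : Fin r → ℝ) (j : Fin r) :
    (A *ᵥ x) ⬝ᵥ (fun k => A k j) = x j := by
  have h1 : (A *ᵥ x) ⬝ᵥ (fun k => A k j) = (Aᵀ *ᵥ (A *ᵥ x)) j := by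
    simp [Matrix.mulVec, dotProduct, Matrix.transpose_apply, mul_comm]
  rw [h1, At_mulVec_A hA]

lemma zeta_eq (q : Fin p → ℝ) (j : Fin r) : zeta A q j = ∑ k, A k j * q k := by
  simp [zeta, Matrix.mulVec, dotProduct, Matrix.transpose_apply]

lemma dot_col_q (q : Fin p → ℝ) (j : Fin r) :
    q ⬝ᵥ (fun k => A k j) = zeta A q j := by
  rw [zeta_eq]
  exact Finset.sum_congr rfl (by intros; ring)

end Helpers

section Helpers2

open Matrix

variable {p r : ℕ} {A : Matrix (Fin p) (Fin r) ℝ}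

lemma zeta_dot_cube (q : Fin p → ℝ) :
    zeta A q ⬝ᵥ (fun j => zeta A q j ^ 3) = l4p4 (zeta A q) := by
  simp only [dotProduct, l4p4]
  exact Finset.sum_congr rfl (by intros; ring)

lemma gradf_dot_col (hA : Aᵀ * A = 1) (θ : ℝ) (q : Fin p → ℝ) (j : Fin r) :
    gradf θ A q ⬝ᵥ (fun k => A k j) =
      ((1-θ) * l4p4 (zeta A q) + θ * (l2sq (zeta A q))^2) * zeta A q j
        - ((1-θ) * (zeta A q j)^3 + θ * l2sq (zeta A q) * zeta A q j) := by
  set ζ := zeta A q with hζ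
  set u := (1 - θ) • (A *ᵥ fun j => ζ j ^ 3) + (θ * l2sq ζ) • (A *ᵥ ζ) with hu
  have hqu : q ⬝ᵥ u = (1-θ) * l4p4 ζ + θ * l2sq ζ * l2sq ζ := by
    rw [hu, dotProduct_add, dotProduct_smul, dotProduct_smul,
      dot_mulVec_eq, dot_mulVec_eq, show Aᵀ *ᵥ q = ζ from rfl]
    rw [zeta_dot_cube, dot_self_eq_l2sq]
    simp [smul_eq_mul, ← hζ]
  have hucol : u ⬝ᵥ (fun k => A k j) = (1-θ) * ζ j ^ 3 + θ * l2sq ζ * ζ j := by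
    rw [hu, add_dotProduct, smul_dotProduct, smul_dotProduct,
      mulVec_dot_col hA, mulVec_dot_col hA]
    simp [smul_eq_mul]
  have hg : gradf θ A q = -(u - (q ⬝ᵥ u) • q) := by
    rw [gradf, proj_mulVec]
  rw [hg, neg_dotProduct, sub_dotProduct, smul_dotProduct, hucol, hqu,
    dot_col_q, ← hζ]
  simp only [smul_eq_mul]
  ring

lemma qform_proj (q v : Fin p → ℝ) (hqv : q ⬝ᵥ v = 0)
    (M : Matrix (Fin p) (Fin p) ℝ) :
    v ⬝ᵥ ((proj q * M * proj q) *ᵥ v) = v ⬝ᵥ (M *ᵥ v) := by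
  have hvq : v ⬝ᵥ q = 0 := by rw [dotProduct_comm]; exact hqv
  rw [← Matrix.mulVec_mulVec, proj_mulVec q v, hqv, zero_smul, sub_zero,
    ← Matrix.mulVec_mulVec, proj_mulVec]
  rw [dotProduct_sub, dotProduct_smul, hvq]
  simp

lemma quad_ADA (hA : Aᵀ * A = 1) (d : Fin r → ℝ) (v : Fin p → ℝ) :
    v ⬝ᵥ ((A * Matrix.diagonal d * Aᵀ) *ᵥ v) = ∑ j, d j * (Aᵀ *ᵥ v) j ^ 2 := by
  rw [← Matrix.mulVec_mulVec, ← Matrix.mulVec_mulVec, dot_mulVec_eq]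
  simp only [dotProduct, Matrix.mulVec_diagonal]
  exact Finset.sum_congr rfl (by intros; ring)

lemma quad_AAt (hA : Aᵀ * A = 1) (v : Fin p → ℝ) :
    v ⬝ᵥ ((A * Aᵀ) *ᵥ v) = l2sq (Aᵀ *ᵥ v) := by
  rw [← Matrix.mulVec_mulVec, dot_mulVec_eq, dot_self_eq_l2sq]

lemma quad_AAtqq (hA : Aᵀ * A = 1) (q v : Fin p → ℝ) :
    v ⬝ᵥ ((A * Aᵀ * Matrix.vecMulVec q q * (A * Aᵀ)) *ᵥ v)
      = ((zeta A q) ⬝ᵥ (Aᵀ *ᵥ v))^2 := by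
  rw [← Matrix.mulVec_mulVec, ← Matrix.mulVec_mulVec]
  rw [show (A * Aᵀ) *ᵥ v = A *ᵥ (Aᵀ *ᵥ v) from (Matrix.mulVec_mulVec _ _ _).symm]
  rw [vecMulVec_mulVec', Matrix.mulVec_smul]
  rw [dotProduct_smul]
  rw [show (A * Aᵀ) *ᵥ q = A *ᵥ (Aᵀ *ᵥ q) from (Matrix.mulVec_mulVec _ _ _).symm]
  rw [dot_mulVec_eq q (Aᵀ *ᵥ v), dot_mulVec_eq v (Aᵀ *ᵥ q)]
  rw [show Aᵀ *ᵥ q = zeta A q from rfl]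
  rw [dotProduct_comm (Aᵀ *ᵥ v) (zeta A q)]
  simp [smul_eq_mul, sq]

lemma quad_one (v : Fin p → ℝ) : v ⬝ᵥ ((1 : Matrix (Fin p) (Fin p) ℝ) *ᵥ v) = l2sq v := by
  rw [Matrix.one_mulVec, dot_self_eq_l2sq]

lemma qform_hessf (hA : Aᵀ * A = 1) (θ : ℝ) (q v : Fin p → ℝ)
    (hqv : q ⬝ᵥ v = 0) :
    qform (hessf θ A q) v =
      -((1-θ) * (3 * (∑ j, (zeta A q j)^2 * (Aᵀ *ᵥ v) j ^2) - l4p4 (zeta A q) * l2sq v))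
      - θ * (l2sq (zeta A q) * l2sq (Aᵀ *ᵥ v) + 2 * ((zeta A q) ⬝ᵥ (Aᵀ *ᵥ v))^2
          - (l2sq (zeta A q))^2 * l2sq v) := by
  set ζ := zeta A q with hζ
  set w := Aᵀ *ᵥ v with hw
  rw [qform, hessf, Matrix.sub_mulVec, Matrix.neg_mulVec, Matrix.smul_mulVec,
    Matrix.smul_mulVec, dotProduct_sub, dotProduct_neg, dotProduct_smul,
    dotProduct_smul]
  rw [qform_proj q v hqv, qform_proj q v hqv]
  rw [Matrix.sub_mulVec, Matrix.smul_mulVec, Matrix.smul_mulVec,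
    dotProduct_sub, dotProduct_smul, dotProduct_smul, quad_ADA hA, quad_one]
  rw [Matrix.sub_mulVec, Matrix.add_mulVec, Matrix.smul_mulVec,
    Matrix.smul_mulVec, Matrix.smul_mulVec,
    dotProduct_sub, dotProduct_add, dotProduct_smul, dotProduct_smul, dotProduct_smul,
    quad_AAt hA, quad_AAtqq hA, quad_one]
  simp only [smul_eq_mul, ← hζ, ← hw]

lemma qform_sub (M N : Matrix (Fin p) (Fin p) ℝ) (v : Fin p → ℝ) :
    qform (M - N) v = qform M v - qform N v := by
  simp [qform, Matrix.sub_mulVec, dotProduct_sub]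

lemma abs_qform_le {m : ℕ} (M : Matrix (Fin m) (Fin m) ℝ) (v : Fin m → ℝ)
    (hv : l2sq v = 1) : |qform M v| ≤ opNorm M := by
  have hnv : ‖(WithLp.equiv 2 (Fin m → ℝ)).symm v‖ = 1 := by
    rw [EuclideanSpace.norm_eq]
    simp only [WithLp.equiv_symm_apply, WithLp.ofLp_toLp, PiLp.toLp_apply, Real.norm_eq_abs, sq_abs]
    rw [show (∑ i, v i ^ 2) = l2sq v from rfl, hv, Real.sqrt_one]
  have hMv : ‖(WithLp.equiv 2 (Fin m → ℝ)).symm (M *ᵥ v)‖ = Real.sqrt (l2sq (M *ᵥ v)) := by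
    rw [EuclideanSpace.norm_eq]
    simp only [WithLp.equiv_symm_apply, WithLp.ofLp_toLp, PiLp.toLp_apply, Real.norm_eq_abs, sq_abs]
    rfl
  have h := (LinearMap.toContinuousLinearMap (Matrix.toEuclideanLin M)).le_opNorm
    ((WithLp.equiv 2 (Fin m → ℝ)).symm v)
  rw [hnv, mul_one] at h
  have happ : (LinearMap.toContinuousLinearMap (Matrix.toEuclideanLin M))
      ((WithLp.equiv 2 (Fin m → ℝ)).symm v)
      = (WithLp.equiv 2 (Fin m → ℝ)).symm (M *ᵥ v) := by
    rfl
  rw [happ, hMv] at h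
  have h0 : |qform M v| ≤ Real.sqrt (l2sq (M *ᵥ v)) := by
    rw [← Real.sqrt_sq_eq_abs]
    apply Real.sqrt_le_sqrt
    calc qform M v ^ 2 ≤ l2sq v * l2sq (M *ᵥ v) := cs_dot v (M *ᵥ v)
      _ = l2sq (M *ᵥ v) := by rw [hv, one_mul]
  exact h0.trans h

end Helpers2

theorem stmt12 : ∃ C : ℝ, 0 < C ∧
    ∀ (p r n : ℕ), 1 ≤ r → r ≤ p → 1 ≤ n →
    ∀ (A : Matrix (Fin p) (Fin r) ℝ), Aᵀ * A = 1 →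
    ∀ (X : Matrix (Fin r) (Fin n) ℝ) (θ σ Cstar δ1 δ2 b : ℝ),
      0 < θ → θ ≤ 1/9 → 0 < σ → 1/5 ≤ Cstar →
      δ1 ≤ 5/10^5 → δ2 ≤ 1/10^3 →
      (∀ q : Fin p → ℝ, l2sq q = 1 → l2norm (gradF θ σ A X q - gradf θ A q) ≤ δ1) →
      (∀ q : Fin p → ℝ, l2sq q = 1 → opNorm (hessF θ σ A X q - hessf θ A q) ≤ δ2) →
      ∀ q : Fin p → ℝ, l2sq q = 1 → gradF θ σ A X q = 0 →
        Cstar ≤ linfSq (zeta A q) →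
        b = (⨆ j : Fin r, |(gradf θ A q - gradF θ σ A X q) ⬝ᵥ (fun k => A k j)|) →
        ∀ i : Fin r,
          Real.sqrt (alphaf θ A q) - 2*b/(alphaf θ A q) ≤ |zeta A q i| →
          (∀ j : Fin r, j ≠ i → |zeta A q j| ≤ 2*b/(alphaf θ A q)) →
          (∃ s : ℝ, (s = 1 ∨ s = -1) ∧ l2sq (q - s • fun k => A k i) ≤ C * δ1) ∧
          (∀ v : Fin p → ℝ, l2sq v = 1 → v ⬝ᵥ q = 0 →
            0 < qform (hessF θ σ A X q) v) := by
  refine ⟨32, by norm_num, ?_⟩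
  intro p r n hr hrp hn A hA X θ σ Cstar δ1 δ2 b hθ0 hθ9 hσ hCs hδ1 hδ2 hGrad hHess
    q hq hgF0 hCsup hb i hi1 hi2
  have hrne : Nonempty (Fin r) := ⟨⟨0, hr⟩⟩
  clear hi1
  obtain ⟨ζ, hζ⟩ : ∃ z : Fin r → ℝ, zeta A q = z := ⟨_, rfl⟩
  obtain ⟨g, hg⟩ : ∃ y : Fin p → ℝ, gradf θ A q = y := ⟨_, rfl⟩
  obtain ⟨T2, hT2⟩ : ∃ x : ℝ, l2sq ζ = x := ⟨_, rfl⟩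
  obtain ⟨T4, hT4⟩ : ∃ x : ℝ, l4p4 ζ = x := ⟨_, rfl⟩
  obtain ⟨α, hα⟩ : ∃ x : ℝ, alphaf θ A q = x := ⟨_, rfl⟩
  rw [hζ] at hCsup
  simp only [hζ, hα] at hi2
  simp only [hg, hgF0, sub_zero] at hb
  have hδ1nn : 0 ≤ δ1 := le_trans (Real.sqrt_nonneg _) (hGrad q hq)
  have hδ2nn : 0 ≤ δ2 := le_trans (norm_nonneg _) (hHess q hq)
  have hC5 : 1/5 ≤ linfSq ζ := le_trans hCs hCsup
  have hδ1small : δ1 ≤ 1/20000 := by norm_num at hδ1; linarith only [hδ1]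
  have hδ2' : δ2 ≤ 1/1000 := by norm_num at hδ2; linarith only [hδ2]
  have hθ1 : θ < 1 := lt_of_le_of_lt hθ9 (by norm_num)
  have h1θ : (8:ℝ)/9 ≤ 1 - θ := by linarith
  have h1θsq : (64:ℝ)/81 ≤ (1-θ)^2 := by nlinarith only [hθ0, hθ9]
  have hgl2 : l2sq g ≤ δ1^2 := by
    have h := hGrad q hq
    have heq : l2sq (gradF θ σ A X q - gradf θ A q) = l2sq g := by
      rw [hgF0, hg, l2sq, l2sq]
      exact Finset.sum_congr rfl fun k _ => by
        show (((0 : Fin p → ℝ) - g) k)^2 = g k ^2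
        simp
    rw [l2norm, heq] at h
    nlinarith only [h, Real.sq_sqrt (l2sq_nonneg g), Real.sqrt_nonneg (l2sq g), hδ1nn]
  clear hGrad hCsup hCs hgF0
  have hbj : ∀ j : Fin r, |g ⬝ᵥ (fun k => A k j)| ≤ b := by
    intro j; rw [hb]
    exact le_ciSup (f := fun j : Fin r => |g ⬝ᵥ (fun k => A k j)|)
      (Set.Finite.bddAbove (Set.finite_range _)) j
  have hb0 : 0 ≤ b := le_trans (abs_nonneg _) (hbj ⟨0, hr⟩)
  have hcolsq : ∀ j : Fin r, l2sq (fun k => A k j) = 1 := by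
    intro j
    have h := congrFun (congrFun hA j) j
    simp only [Matrix.mul_apply, Matrix.transpose_apply, Matrix.one_apply_eq] at h
    simpa [l2sq, sq] using h
  have hbδ : b ≤ δ1 := by
    rw [hb]
    apply ciSup_le
    intro j
    have h := cs_dot g (fun k => A k j)
    rw [hcolsq j, mul_one] at h
    rw [abs_le]
    constructor <;> nlinarith only [h, hgl2, hδ1nn]
  clear hb
  have hb2δ2 : b^2 ≤ δ1^2 := by nlinarith only [hbδ, hb0]
  have h1θ0 : (1:ℝ) - θ ≠ 0 := by linarith
  have hαmul : (1-θ) * α = (1-θ) * T4 + θ * (T2^2 - T2) := by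
    rw [← hα, alphaf, hζ, hT2, hT4, mul_add, ← mul_assoc,
      mul_comm (1-θ) (θ/(1-θ)), div_mul_cancel₀ _ h1θ0]
  have hgj : ∀ j, g ⬝ᵥ (fun k => A k j) = (1-θ) * (α * ζ j - ζ j ^3) := by
    intro j
    rw [← hg, gradf_dot_col hA, hζ, hT2, hT4]
    linear_combination (-ζ j) * hαmul
  have hcub2 : ∀ j, ζ j^2 * (ζ j^2 - α)^2 ≤ (81/64) * b^2 := by
    intro j
    have h1 := hbj j
    rw [hgj j] at h1
    have h3 := abs_le.mp h1
    have h2 : ((1-θ) * (α * ζ j - ζ j^3))^2 ≤ b^2 := sq_le_sq' h3.1 h3.2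
    have hmulhint : 0 ≤ ((1-θ)^2 - 64/81) * (α * ζ j - ζ j^3)^2 :=
      mul_nonneg (by linarith only [h1θsq]) (sq_nonneg _)
    linarith only [h2, hmulhint]
  have hsum : ∑ j, ζ j^2 * (ζ j^2 - α)^2 ≤ (81/64) * δ1^2 := by
    have hA2 : ∑ j, (g ⬝ᵥ (fun k => A k j))^2 ≤ δ1^2 := by
      have h1 : ∀ j, (Aᵀ *ᵥ g) j = g ⬝ᵥ (fun k => A k j) := by
        intro j; simp [Matrix.mulVec, dotProduct, Matrix.transpose_apply, mul_comm]
      calc ∑ j, (g ⬝ᵥ (fun k => A k j))^2 = l2sq (Aᵀ *ᵥ g) := by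
            rw [l2sq]; exact Finset.sum_congr rfl fun j _ => by rw [h1 j]
        _ ≤ l2sq g := l2sq_At_le hA g
        _ ≤ δ1^2 := hgl2
    calc ∑ j, ζ j^2*(ζ j^2-α)^2 ≤ ∑ j, (81/64) * (g ⬝ᵥ (fun k => A k j))^2 := by
          apply Finset.sum_le_sum
          intro j _
          rw [hgj j]
          have hmulhint : 0 ≤ ((81/64)*(1-θ)^2 - 1) * (α * ζ j - ζ j^3)^2 :=
            mul_nonneg (by linarith only [h1θsq]) (sq_nonneg _)
          linarith only [hmulhint]
      _ = (81/64) * ∑ j, (g ⬝ᵥ fun k => A k j)^2 := by rw [Finset.mul_sum]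
      _ ≤ (81/64) * δ1^2 := by linarith only [hA2]
  have hT2le : T2 ≤ 1 := by
    have h := l2sq_At_le hA q
    rw [hq, show Aᵀ *ᵥ q = zeta A q from rfl, hζ, hT2] at h
    exact h
  have hT2nn : 0 ≤ T2 := by rw [← hT2]; exact l2sq_nonneg ζ
  have hζsq : ∀ j, ζ j ^2 ≤ T2 := by
    intro j
    rw [← hT2, l2sq]
    exact Finset.single_le_sum (f := fun j => ζ j^2) (fun _ _ => sq_nonneg _) (Finset.mem_univ j)
  obtain ⟨J, -, hJmax⟩ := Finset.exists_max_image (Finset.univ : Finset (Fin r))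
    (fun j => ζ j^2) ⟨⟨0, hr⟩, Finset.mem_univ _⟩
  have hJ5 : 1/5 ≤ ζ J^2 := by
    have h1 : linfSq ζ ≤ ζ J^2 := by
      rw [linfSq]; exact ciSup_le fun j => hJmax j (Finset.mem_univ j)
    linarith only [hC5, h1]
  have hα3b : |ζ J^2 - α| ≤ 3*b := by
    have h := hcub2 J
    rw [abs_le]
    constructor <;> nlinarith only [h, hJ5, hb0, sq_nonneg (ζ J^2 - α), sq_nonneg b]
  have hα19 : 19/100 ≤ α := by
    have h := (abs_le.mp hα3b).2
    linarith only [h, hJ5, hbδ, hδ1small]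
  have hsmall : ∀ j, j ≠ i → |ζ j| ≤ 11 * b := by
    intro j hj
    have h := hi2 j hj
    have h2 : 2*b/α ≤ 11*b := by
      rw [div_le_iff₀ (by linarith only [hα19] : (0:ℝ) < α)]
      nlinarith only [hb0, hα19]
    linarith only [h, h2]
  have hsm2 : ∀ j, j ≠ i → ζ j^2 ≤ 121 * b^2 := by
    intro j hj
    nlinarith only [hsmall j hj, abs_nonneg (ζ j), sq_abs (ζ j), hb0]
  clear hi2 hsmall
  have hJi : J = i := by
    by_contra hne
    have h := hsm2 J hne
    nlinarith only [h, hJ5, hb2δ2, hδ1small, hδ1nn]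
  have hi5 : 1/5 ≤ ζ i^2 := hJi ▸ hJ5
  rw [hJi] at hα3b
  have hαi := abs_le.mp hα3b
  have hmax : ∀ j, ζ j^2 ≤ ζ i^2 := fun j => hJi ▸ hJmax j (Finset.mem_univ j)
  have hrest : ∑ j ∈ Finset.univ.erase i, ζ j^2 ≤ 64 * δ1^2 := by
    have key : ∀ j ∈ Finset.univ.erase i, (3/100) * ζ j^2 ≤ ζ j^2 * (ζ j^2 - α)^2 := by
      intro j hj
      have hji : j ≠ i := Finset.ne_of_mem_erase hj
      have hz6 : ζ j^2 ≤ 1/1000000 := by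
        nlinarith only [hsm2 j hji, hb2δ2, hδ1small, hδ1nn]
      have hu : 18/100 ≤ α - ζ j^2 := by linarith only [hα19, hz6]
      have h2 : 3/100 ≤ (ζ j^2 - α)^2 := by nlinarith only [hu]
      nlinarith only [sq_nonneg (ζ j), h2]
    have h3 := Finset.sum_le_sum key
    have h4 : ∑ j ∈ Finset.univ.erase i, ζ j^2*(ζ j^2-α)^2 ≤ ∑ j, ζ j^2*(ζ j^2-α)^2 :=
      Finset.sum_le_sum_of_subset_of_nonneg (Finset.subset_univ _)
        (fun j _ _ => by positivity)
    rw [← Finset.mul_sum] at h3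
    linarith only [hsum, h3, h4, sq_nonneg δ1]
  have hT4le : T4 ≤ ζ i^2 * T2 := by
    rw [← hT4, l4p4, ← hT2, l2sq, Finset.mul_sum]
    apply Finset.sum_le_sum
    intro j _
    nlinarith only [hmax j, sq_nonneg (ζ j)]
  have hθfrac : 0 ≤ θ/(1-θ) := div_nonneg hθ0.le (by linarith)
  have hαle : α ≤ ζ i^2 * T2 := by
    have h0 : α = T4 + (θ/(1-θ)) * (T2^2 - T2) := by rw [← hα, alphaf, hζ, hT2, hT4]
    have h5 : (θ/(1-θ)) * (T2^2 - T2) ≤ 0 := by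
      apply mul_nonpos_of_nonneg_of_nonpos hθfrac
      nlinarith only [hT2le, hT2nn]
    linarith only [hT4le, h0, h5]
  have hT2lb : 1 - 15*δ1 ≤ T2 := by
    have hp : (0:ℝ) ≤ (ζ i^2 - 1/5) * (1 - T2) :=
      mul_nonneg (by linarith only [hi5]) (by linarith only [hT2le])
    linarith only [hαi.2, hαle, hp, hbδ]
  have hsplit : ζ i^2 + ∑ j ∈ Finset.univ.erase i, ζ j^2 = T2 := by
    rw [← hT2, l2sq]
    exact Finset.add_sum_erase _ (fun j => ζ j^2) (Finset.mem_univ i)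
  have hζi2 : 1 - 16*δ1 ≤ ζ i^2 := by
    nlinarith only [hrest, hT2lb, hδ1small, hδ1nn, hsplit]
  have hζi1 : ζ i^2 ≤ 1 := le_trans (hζsq i) hT2le
  have hup : ζ i ≤ 1 := by nlinarith only [hζi1, sq_nonneg (ζ i - 1)]
  have hlo : -1 ≤ ζ i := by nlinarith only [hζi1, sq_nonneg (ζ i + 1)]
  obtain ⟨s, hs1, hsz⟩ : ∃ s : ℝ, (s = 1 ∨ s = -1) ∧ s * ζ i = |ζ i| := by
    rcases le_or_gt 0 (ζ i) with h | h
    · exact ⟨1, Or.inl rfl, by rw [abs_of_nonneg h, one_mul]⟩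
    · exact ⟨-1, Or.inr rfl, by rw [abs_of_neg h]; ring⟩
  have hsabs : |ζ i| ≥ ζ i ^2 := by
    rcases le_or_gt 0 (ζ i) with h | h
    · rw [abs_of_nonneg h]; nlinarith only [h, hup]
    · rw [abs_of_neg h]; nlinarith only [h, hlo]
  have hval : 1 - 2*s*ζ i + s^2 ≤ 32 * δ1 := by
    have hss : s^2 = 1 := by rcases hs1 with h | h <;> rw [h] <;> norm_num
    have h2 : 2*(s*ζ i) = 2*|ζ i| := by rw [hsz]
    linarith only [hss, h2, hsabs, hζi2]
  have hexp : ∀ t : ℝ, l2sq (q - t • fun k => A k i) = 1 - 2*t*ζ i + t^2 := by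
    intro t
    calc l2sq (q - t • fun k => A k i)
        = ∑ k, (q k^2 - 2*t*(A k i * q k) + t^2 * A k i^2) := by
          rw [l2sq]
          exact Finset.sum_congr rfl fun k _ => by
            show ((q - t • fun k => A k i) k)^2 = _
            simp only [Pi.sub_apply, Pi.smul_apply, smul_eq_mul]
            ring
      _ = (∑ k, q k^2) - 2*t*(∑ k, A k i * q k) + t^2 * ∑ k, A k i^2 := by
          rw [Finset.sum_add_distrib, Finset.sum_sub_distrib, ← Finset.mul_sum, ← Finset.mul_sum]
      _ = 1 - 2*t*ζ i + t^2 := by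
          rw [show (∑ k, q k^2) = l2sq q from rfl, hq, ← zeta_eq, hζ,
            show (∑ k, A k i^2) = l2sq (fun k => A k i) from rfl, hcolsq i, mul_one]
  have hexp2 : ∀ t : ℝ, l2sq ((fun k => A k i) - t • q) = 1 - 2*t*ζ i + t^2 := by
    intro t
    calc l2sq ((fun k => A k i) - t • q)
        = ∑ k, (A k i^2 - 2*t*(A k i * q k) + t^2 * q k^2) := by
          rw [l2sq]
          exact Finset.sum_congr rfl fun k _ => by
            show (((fun k => A k i) - t • q) k)^2 = _
            simp only [Pi.sub_apply, Pi.smul_apply, smul_eq_mul]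
            ring
      _ = (∑ k, A k i^2) - 2*t*(∑ k, A k i * q k) + t^2 * ∑ k, q k^2 := by
          rw [Finset.sum_add_distrib, Finset.sum_sub_distrib, ← Finset.mul_sum, ← Finset.mul_sum]
      _ = 1 - 2*t*ζ i + t^2 := by
          rw [show (∑ k, q k^2) = l2sq q from rfl, hq, ← zeta_eq, hζ,
            show (∑ k, A k i^2) = l2sq (fun k => A k i) from rfl, hcolsq i, mul_one]
  have hqa : l2sq (q - s • fun k => A k i) ≤ 32 * δ1 := by rw [hexp s]; exact hval
  have hqa2 : l2sq ((fun k => A k i) - s • q) ≤ 32 * δ1 := by rw [hexp2 s]; exact hval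
  constructor
  · exact ⟨s, hs1, hqa⟩
  · intro v hv hvq
    have hqv : q ⬝ᵥ v = 0 := by rw [dotProduct_comm]; exact hvq
    obtain ⟨w, hw⟩ : ∃ y : Fin r → ℝ, Aᵀ *ᵥ v = y := ⟨_, rfl⟩
    have hw1 : l2sq w ≤ 1 := by
      have h := l2sq_At_le hA v
      rw [hv, hw] at h
      exact h
    have hw0 : 0 ≤ l2sq w := l2sq_nonneg w
    have hwi1 : w i = v ⬝ᵥ (fun k => A k i) := by
      rw [← hw]
      simp [Matrix.mulVec, dotProduct, Matrix.transpose_apply, mul_comm]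
    have hwi2 : v ⬝ᵥ ((fun k => A k i) - s • q) = w i := by
      rw [dotProduct_sub, dotProduct_smul, hvq, smul_eq_mul, mul_zero, sub_zero, ← hwi1]
    have hwi : w i ^2 ≤ 32 * δ1 := by
      have h := cs_dot v ((fun k => A k i) - s • q)
      rw [hwi2, hv, one_mul] at h
      linarith only [h, hqa2]
    have hSb : (∑ j, ζ j^2 * w j ^2) ≤ w i^2 + 1/1000000 := by
      have hsplitS : ζ i^2 * w i^2 + ∑ j ∈ Finset.univ.erase i, ζ j^2*w j^2
          = ∑ j, ζ j^2 * w j^2 :=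
        Finset.add_sum_erase _ (fun j => ζ j^2 * w j^2) (Finset.mem_univ i)
      have h1 : ∑ j ∈ Finset.univ.erase i, ζ j^2*w j^2
          ≤ ∑ j ∈ Finset.univ.erase i, (1/1000000) * w j^2 := by
        apply Finset.sum_le_sum
        intro j hj
        have hz6 : ζ j^2 ≤ 1/1000000 := by
          nlinarith only [hsm2 j (Finset.ne_of_mem_erase hj), hb2δ2, hδ1small, hδ1nn]
        linarith only [mul_nonneg (by linarith only [hz6] : (0:ℝ) ≤ 1/1000000 - ζ j^2)
          (sq_nonneg (w j))]
      have h2 : ∑ j ∈ Finset.univ.erase i, (1/1000000:ℝ) * w j^2 ≤ 1/1000000 := by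
        rw [← Finset.mul_sum]
        have h5 : ∑ j ∈ Finset.univ.erase i, w j^2 ≤ l2sq w := by
          rw [l2sq]
          exact Finset.sum_le_sum_of_subset_of_nonneg (Finset.subset_univ _)
            (fun j _ _ => sq_nonneg _)
        linarith only [hw1, h5]
      have h3 : ζ i^2*w i^2 ≤ w i^2 := by nlinarith only [hζi1, sq_nonneg (w i)]
      linarith only [hsplitS, h1, h2, h3]
    have hT4lb : (1-16*δ1)^2 ≤ T4 := by
      have h4 : ζ i^4 ≤ T4 := by
        rw [← hT4, l4p4]
        exact Finset.single_le_sum (f := fun j => ζ j^4) (fun j _ => by positivity)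
          (Finset.mem_univ i)
      have h16 : (0:ℝ) ≤ 1 - 16*δ1 := by linarith only [hδ1small]
      linarith only [pow_le_pow_left₀ h16 hζi2 2, h4]
    have hζw : (ζ ⬝ᵥ w)^2 ≤ 1 := by
      have h := cs_dot ζ w
      rw [hT2] at h
      linarith only [h, hw1,
        mul_nonneg (by linarith only [hT2le] : (0:ℝ) ≤ 1 - T2) hw0]
    have hX2 : T2*l2sq w + 2*(ζ ⬝ᵥ w)^2 - T2^2 ≤ 201/100 := by
      linarith only [mul_nonneg (by linarith only [hT2le] : (0:ℝ) ≤ 1 - T2) hw0, hζw, hw1,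
        mul_nonneg (by linarith only [hT2lb, hδ1small] : (0:ℝ) ≤ T2 - (1-15*δ1))
          (by linarith only [hT2lb, hδ1small] : (0:ℝ) ≤ T2 + (1-15*δ1)),
        hδ1small, hδ1nn, sq_nonneg δ1]
    have hθX : θ * (T2*l2sq w + 2*(ζ ⬝ᵥ w)^2 - T2^2) ≤ 201/900 := by
      linarith only [mul_nonneg hθ0.le
        (by linarith only [hX2] : (0:ℝ) ≤ 201/100 - (T2*l2sq w + 2*(ζ ⬝ᵥ w)^2 - T2^2)), hθ9]
    have h3S : 3*(∑ j, ζ j^2 * w j^2) - T4 ≤ -(99/100) := by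
      linarith only [hSb, hwi, hT4lb, hδ1small, sq_nonneg δ1]
    have hfirst : (1-θ)*(3*(∑ j, ζ j^2 * w j^2) - T4) ≤ (8/9) * (-(99/100)) := by
      linarith only [mul_nonneg (by linarith only [h1θ] : (0:ℝ) ≤ 1-θ-8/9)
        (by linarith only [h3S] : (0:ℝ) ≤ -(3*(∑ j, ζ j^2 * w j^2) - T4)), h3S]
    have hQ := qform_hessf hA θ q v hqv
    rw [hζ, hw, hT2, hT4, hv, mul_one, mul_one] at hQ
    have herr : |qform (hessF θ σ A X q - hessf θ A q) v| ≤ δ2 :=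
      (abs_qform_le (hessF θ σ A X q - hessf θ A q) v hv).trans (hHess q hq)
    rw [qform_sub] at herr
    have hherr := (abs_le.mp herr).1
    linarith only [hQ, hherr, hfirst, hθX, hδ2']

end
end

section
/- There exists an absolute constant C > 0 with the following property. Let θ ∈ (0,1], r ≥ 1, and let x be a random vector in ℝ^r with i.i.d. BG(θ,1) entries. Then for every unit vector q ∈ ℝ^r, E[((1/(12θ))·(qᵀx)⁴)²] ≤ C/θ; equivalently, E[(qᵀx)⁸] ≤ 144·C·θ. -/
open Matrix MeasureTheory ProbabilityTheory Real
open scoped BigOperators ENNReal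

noncomputable section

namespace BGaux


lemma bern_prob {θ : ℝ} (h0 : 0 ≤ θ) (h1 : θ ≤ 1) :
    IsProbabilityMeasure (bernoulliReal θ) := by
  constructor
  simp only [bernoulliReal, Measure.coe_add, Measure.coe_smul, Pi.add_apply, Pi.smul_apply,
    measure_univ, smul_eq_mul, mul_one]
  rw [← ENNReal.ofReal_add h0 (by linarith)]
  norm_num

lemma bg_prob {θ : ℝ} (h0 : 0 ≤ θ) (h1 : θ ≤ 1) :
    IsProbabilityMeasure (bgLaw θ 1) := by
  haveI := bern_prob h0 h1
  exact Measure.isProbabilityMeasure_map (measurable_fst.mul measurable_snd).aemeasurable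

lemma x8_le (x : ℝ) : x ^ 8 ≤ 65536 * rexp (x ^ 2 / 4) := by
  have h1 : x ^ 2 / 16 + 1 ≤ rexp (x ^ 2 / 16) := Real.add_one_le_exp _
  have h2 : (x ^ 2 / 16) ^ 4 ≤ (rexp (x ^ 2 / 16)) ^ 4 := by
    apply pow_le_pow_left₀ (by positivity)
    nlinarith [sq_nonneg x]
  have h3 : (rexp (x ^ 2 / 16)) ^ 4 = rexp (x ^ 2 / 4) := by
    rw [← Real.exp_nat_mul]; congr 1; ring
  nlinarith [h2, h3]

lemma gauss_moment (k : ℕ) (hk : k ≤ 4) :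
    ∫⁻ z : ℝ, ENNReal.ofReal (z ^ (2 * k)) ∂(gaussianReal 0 (1 : ℝ).toNNReal)
      ≤ ENNReal.ofReal 300000 := by
  rw [Real.toNNReal_one, gaussianReal_of_var_ne_zero _ one_ne_zero,
    lintegral_withDensity_eq_lintegral_mul _ (measurable_gaussianPDF _ _)
      (by measurability)]
  have hpt : ∀ x : ℝ, (gaussianPDF 0 1 * fun x => ENNReal.ofReal (x ^ (2 * k))) x
      ≤ ENNReal.ofReal (65537 * rexp (-4⁻¹ * x ^ 2)) := by
    intro x
    simp only [Pi.mul_apply, gaussianPDF, ← ENNReal.ofReal_mul (gaussianPDFReal_nonneg _ _ _)]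
    apply ENNReal.ofReal_le_ofReal
    have hpdf : gaussianPDFReal 0 1 x ≤ rexp (-x ^ 2 / 2) := by
      rw [gaussianPDFReal]
      simp only [NNReal.coe_one, mul_one, sub_zero]
      have h2 : (1 : ℝ) ≤ √(2 * π) := by
        rw [show (1 : ℝ) = √1 by simp]
        apply Real.sqrt_le_sqrt
        nlinarith [Real.pi_gt_three]
      calc (√(2 * π))⁻¹ * rexp (-x ^ 2 / 2)
          ≤ 1 * rexp (-x ^ 2 / 2) :=
            mul_le_mul_of_nonneg_right (inv_le_one_of_one_le₀ h2) (Real.exp_nonneg _)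
        _ = rexp (-x ^ 2 / 2) := one_mul _
    have hx2k : x ^ (2 * k) ≤ 1 + x ^ 8 := by
      rw [pow_mul]
      rcases le_or_gt (x ^ 2) 1 with h | h
      · have h5 : (x ^ 2) ^ k ≤ 1 := pow_le_one₀ (sq_nonneg x) h
        nlinarith [pow_nonneg (sq_nonneg x) 4]
      · have h5 : (x ^ 2) ^ k ≤ (x ^ 2) ^ 4 := pow_le_pow_right₀ h.le hk
        nlinarith [h5]
    have e1 : rexp (-x ^ 2 / 2) ≤ rexp (-4⁻¹ * x ^ 2) :=
      Real.exp_le_exp.mpr (by nlinarith [sq_nonneg x])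
    have e3 : rexp (x ^ 2 / 4) * rexp (-x ^ 2 / 2) = rexp (-4⁻¹ * x ^ 2) := by
      rw [← Real.exp_add]; congr 1; ring
    have e2 : x ^ 8 * rexp (-x ^ 2 / 2) ≤ 65536 * rexp (-4⁻¹ * x ^ 2) := by
      calc x ^ 8 * rexp (-x ^ 2 / 2)
          ≤ 65536 * rexp (x ^ 2 / 4) * rexp (-x ^ 2 / 2) :=
            mul_le_mul_of_nonneg_right (x8_le x) (Real.exp_nonneg _)
        _ = 65536 * rexp (-4⁻¹ * x ^ 2) := by rw [mul_assoc, e3]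
    have hprod : gaussianPDFReal 0 1 x * x ^ (2 * k)
        ≤ rexp (-x ^ 2 / 2) * (1 + x ^ 8) :=
      mul_le_mul hpdf hx2k (by rw [pow_mul]; positivity) (Real.exp_nonneg _)
    calc gaussianPDFReal 0 1 x * x ^ (2 * k)
        ≤ rexp (-x ^ 2 / 2) * (1 + x ^ 8) := hprod
      _ = rexp (-x ^ 2 / 2) + x ^ 8 * rexp (-x ^ 2 / 2) := by ring
      _ ≤ rexp (-4⁻¹ * x ^ 2) + 65536 * rexp (-4⁻¹ * x ^ 2) := add_le_add e1 e2
      _ = 65537 * rexp (-4⁻¹ * x ^ 2) := by ring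
  calc ∫⁻ x, (gaussianPDF 0 1 * fun x => ENNReal.ofReal (x ^ (2 * k))) x
      ≤ ∫⁻ x, ENNReal.ofReal (65537 * rexp (-4⁻¹ * x ^ 2)) := lintegral_mono hpt
    _ = ENNReal.ofReal (∫ x : ℝ, 65537 * rexp (-4⁻¹ * x ^ 2)) := by
        rw [← ofReal_integral_eq_lintegral_ofReal
          (((integrable_exp_neg_mul_sq (by norm_num : (0:ℝ) < 4⁻¹)).const_mul 65537))
          (Filter.Eventually.of_forall fun x => by positivity)]
    _ ≤ ENNReal.ofReal 300000 := by
        apply ENNReal.ofReal_le_ofReal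
        rw [MeasureTheory.integral_const_mul, integral_gaussian]
        have h16 : √(π / 4⁻¹) ≤ 4 := by
          have : π / 4⁻¹ ≤ 16 := by rw [div_inv_eq_mul]; nlinarith [Real.pi_le_four]
          calc √(π / 4⁻¹) ≤ √16 := Real.sqrt_le_sqrt this
            _ = 4 := by rw [show (16:ℝ) = 4 ^ 2 by norm_num, Real.sqrt_sq (by norm_num)]
        nlinarith [Real.sqrt_nonneg (π / 4⁻¹)]



lemma gauss_neg : (gaussianReal 0 (1 : ℝ).toNNReal).map (fun z : ℝ => -z)
    = gaussianReal 0 (1 : ℝ).toNNReal := by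
  have h : (fun z : ℝ => -z) = fun z : ℝ => (-1) * z := by funext z; ring
  rw [h, gaussianReal_map_const_mul]
  norm_num

lemma bern_sfin {θ : ℝ} : SFinite (bernoulliReal θ) := by
  unfold bernoulliReal; infer_instance

lemma lintegral_bgLaw {θ : ℝ} (f : ℝ → ℝ≥0∞) (hf : Measurable f) :
    ∫⁻ a, f a ∂(bgLaw θ 1) = ENNReal.ofReal θ * ∫⁻ z, f z ∂(gaussianReal 0 (1:ℝ).toNNReal)
      + ENNReal.ofReal (1 - θ) * f 0 := by
  haveI := bern_sfin (θ := θ)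
  have hg : Measurable fun b : ℝ => ∫⁻ z, f (b * z) ∂(gaussianReal 0 (1:ℝ).toNNReal) :=
    Measurable.lintegral_prod_right (hf.comp (measurable_fst.mul measurable_snd))
  rw [bgLaw, lintegral_map (g := fun p : ℝ × ℝ => p.1 * p.2) hf (measurable_fst.mul measurable_snd),
    lintegral_prod (fun p : ℝ × ℝ => f (p.1 * p.2))
      ((hf.comp (measurable_fst.mul measurable_snd)).aemeasurable)]
  rw [bernoulliReal, lintegral_add_measure, lintegral_smul_measure, lintegral_smul_measure,
    lintegral_dirac' _ hg, lintegral_dirac' _ hg]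
  simp only [one_mul, zero_mul]
  rw [lintegral_const]
  simp [measure_univ]

lemma bg_symm {θ : ℝ} : (bgLaw θ 1).map (fun a : ℝ => -a) = bgLaw θ 1 := by
  haveI := bern_sfin (θ := θ)
  rw [bgLaw, Measure.map_map (f := fun p : ℝ × ℝ => p.1 * p.2) measurable_neg (measurable_fst.mul measurable_snd)]
  have h : ((fun a : ℝ => -a) ∘ fun p : ℝ × ℝ => p.1 * p.2)
      = (fun p : ℝ × ℝ => p.1 * p.2) ∘ (Prod.map id fun z : ℝ => -z) := by
    funext p; simp [mul_neg]
  rw [h, ← Measure.map_map (g := fun p : ℝ × ℝ => p.1 * p.2) (measurable_fst.mul measurable_snd)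
    (measurable_id.prodMap measurable_neg),
    ← Measure.map_prod_map _ _ measurable_id measurable_neg, Measure.map_id, gauss_neg]



lemma bg_moment {θ : ℝ} (h0 : 0 ≤ θ) (k : ℕ) (hk1 : 1 ≤ k) (hk : k ≤ 4) (c : ℝ) :
    ∫⁻ a, ENNReal.ofReal ((c * a) ^ (2 * k)) ∂(bgLaw θ 1)
      ≤ ENNReal.ofReal (c ^ 2) ^ k * (ENNReal.ofReal θ * ENNReal.ofReal 300000) := by
  have hmeas : Measurable fun a : ℝ => ENNReal.ofReal ((c * a) ^ (2 * k)) :=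
    ENNReal.measurable_ofReal.comp ((measurable_id.const_mul c).pow_const _)
  rw [lintegral_bgLaw _ hmeas]
  have hz : ((c * (0:ℝ)) ^ (2 * k)) = 0 := by
    rw [mul_zero]; exact zero_pow (by omega)
  rw [hz]
  simp only [ENNReal.ofReal_zero, mul_zero, add_zero]
  have hsplit : ∀ z : ℝ, ENNReal.ofReal ((c * z) ^ (2 * k))
      = ENNReal.ofReal (c ^ 2) ^ k * ENNReal.ofReal (z ^ (2 * k)) := by
    intro z
    rw [mul_pow, ← ENNReal.ofReal_pow (sq_nonneg c), ← pow_mul,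
      ← ENNReal.ofReal_mul (by rw [pow_mul]; positivity : (0:ℝ) ≤ c ^ (2 * k))]
  simp_rw [hsplit]
  rw [lintegral_const_mul _
    (show Measurable fun z : ℝ => ENNReal.ofReal (z ^ (2 * k)) by measurability)]
  calc ENNReal.ofReal θ * (ENNReal.ofReal (c ^ 2) ^ k
        * ∫⁻ z, ENNReal.ofReal (z ^ (2 * k)) ∂(gaussianReal 0 (1:ℝ).toNNReal))
      = ENNReal.ofReal (c ^ 2) ^ k * (ENNReal.ofReal θ
        * ∫⁻ z, ENNReal.ofReal (z ^ (2 * k)) ∂(gaussianReal 0 (1:ℝ).toNNReal)) := by ring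
    _ ≤ ENNReal.ofReal (c ^ 2) ^ k * (ENNReal.ofReal θ * ENNReal.ofReal 300000) := by
        gcongr
        exact gauss_moment k hk



def cstN (j : ℕ) : ℝ≥0∞ := ((76800000 ^ j : ℕ) : ℝ≥0∞)

lemma ep_nonneg (u : ℝ) (n : ℕ) : 0 ≤ u ^ (2 * n) := by
  rw [pow_mul]; positivity

lemma even_binom (m : ℕ) (hm : m ≤ 4) (s t : ℝ) :
    (t + s) ^ (2 * m) + (s - t) ^ (2 * m)
      = 2 * ∑ k ∈ Finset.range (m + 1),
          (Nat.choose (2 * m) (2 * k) : ℝ) * s ^ (2 * (m - k)) * t ^ (2 * k) := by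
  interval_cases m <;> norm_num [Finset.sum_range_succ, Nat.choose] <;> ring

lemma cst_num {m k : ℕ} (hk1 : 1 ≤ k) (hkm : k ≤ m) (hm : m ≤ 4) :
    (Nat.choose (2 * m) (2 * k) : ℝ≥0∞) * cstN (m - k) * ENNReal.ofReal 300000
      ≤ cstN m * (Nat.choose m k : ℝ≥0∞) := by
  have hM : ENNReal.ofReal 300000 = ((300000 : ℕ) : ℝ≥0∞) := by
    rw [show (300000 : ℝ) = ((300000 : ℕ) : ℝ) by norm_num, ENNReal.ofReal_natCast]
  rw [hM, cstN, cstN, ← Nat.cast_mul, ← Nat.cast_mul, ← Nat.cast_mul]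
  rw [Nat.cast_le]
  interval_cases m <;> interval_cases k <;> simp [Nat.choose] <;> norm_num

lemma key {θ : ℝ} (h0 : 0 < θ) (h1 : θ ≤ 1) :
    ∀ (r : ℕ) (q : Fin r → ℝ) (m : ℕ), 1 ≤ m → m ≤ 4 →
    ∫⁻ x, ENNReal.ofReal ((q ⬝ᵥ x) ^ (2 * m)) ∂(bgVec r θ 1)
      ≤ cstN m * ENNReal.ofReal θ * (ENNReal.ofReal (∑ i, q i ^ 2)) ^ m := by
  intro r
  induction r with
  | zero =>
      intro q m hm1 _
      have hq : ∀ x : Fin 0 → ℝ, q ⬝ᵥ x = 0 := fun x => by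
        simp [dotProduct]
      simp only [hq, zero_pow (by omega : 2 * m ≠ 0), ENNReal.ofReal_zero, lintegral_zero]
      exact zero_le
  | succ r ih =>
      intro q m hm1 hm4
      haveI hprob : IsProbabilityMeasure (bgLaw θ 1) := bg_prob h0.le h1
      haveI hprob2 : IsProbabilityMeasure (bgVec r θ 1) := by
        rw [bgVec]; infer_instance
      set qt : Fin r → ℝ := fun j => q j.succ with hqt
      set θ' := ENNReal.ofReal θ with hθ'
      set T := ENNReal.ofReal (∑ j, qt j ^ 2) with hT
      set Q := ENNReal.ofReal (q 0 ^ 2) with hQ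
      set M := ENNReal.ofReal 300000 with hM
      set I : ℕ → ℝ≥0∞ :=
        fun j => ∫⁻ y, ENNReal.ofReal ((qt ⬝ᵥ y) ^ (2 * j)) ∂(bgVec r θ 1) with hI
      set J : ℕ → ℝ≥0∞ :=
        fun k => ∫⁻ a, ENNReal.ofReal ((q 0 * a) ^ (2 * k)) ∂(bgLaw θ 1) with hJ
      have meas_dotr : Measurable fun y : Fin r → ℝ => qt ⬝ᵥ y := by
        simp only [dotProduct]
        exact Finset.measurable_sum _ fun i _ => (measurable_pi_apply i : Measurable fun y : Fin r → ℝ => y i).const_mul _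
      have meas_inner : Measurable fun p : ℝ × (Fin r → ℝ) =>
          ENNReal.ofReal ((q 0 * p.1 + qt ⬝ᵥ p.2) ^ (2 * m)) :=
        ENNReal.measurable_ofReal.comp
          (((measurable_fst.const_mul _).add (meas_dotr.comp measurable_snd)).pow_const _)
      set G : ℝ → ℝ≥0∞ :=
        fun a => ∫⁻ y, ENNReal.ofReal ((q 0 * a + qt ⬝ᵥ y) ^ (2 * m)) ∂(bgVec r θ 1) with hG
      have hGmeas : Measurable G := by exact meas_inner.lintegral_prod_right'
      have measS : ∀ n : ℕ, Measurable fun y : Fin r → ℝ =>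
          ENNReal.ofReal ((qt ⬝ᵥ y) ^ n) := fun n => by
        exact ENNReal.measurable_ofReal.comp (meas_dotr.pow_const n)
      have measA : ∀ n : ℕ, Measurable fun a : ℝ =>
          ENNReal.ofReal ((q 0 * a) ^ n) := fun n => by
        exact ENNReal.measurable_ofReal.comp ((measurable_id.const_mul _).pow_const n)
      have hdot : ∀ (a : ℝ) (y : Fin r → ℝ),
          q ⬝ᵥ (Fin.cons a y : Fin (r+1) → ℝ) = q 0 * a + qt ⬝ᵥ y := by
        intro a y
        simp [dotProduct, Fin.sum_univ_succ, hqt]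
      -- step 1
      have hL1 : ∫⁻ x, ENNReal.ofReal ((q ⬝ᵥ x) ^ (2 * m)) ∂(bgVec (r+1) θ 1)
          = ∫⁻ a, G a ∂(bgLaw θ 1) := by
        have mp := (measurePreserving_piFinSuccAbove
          (fun _ : Fin (r+1) => bgLaw θ 1) 0).symm
        have measf : Measurable fun x : Fin (r+1) → ℝ =>
            ENNReal.ofReal ((q ⬝ᵥ x) ^ (2 * m)) := by
          exact ENNReal.measurable_ofReal.comp
            ((Finset.measurable_sum Finset.univ
              (fun i _ => (measurable_pi_apply i : Measurable fun y : Fin (r+1) → ℝ => y i).const_mul (q i))).pow_const _)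
        rw [show (bgVec (r+1) θ 1) = Measure.pi (fun _ : Fin (r+1) => bgLaw θ 1) from rfl,
          ← mp.map_eq, lintegral_map measf (MeasurableEquiv.measurable _)]
        simp only [MeasurableEquiv.piFinSuccAbove_symm_apply, Fin.insertNthEquiv_zero,
          Fin.consEquiv_apply]
        have hcons : ∀ p : ℝ × (Fin r → ℝ),
            ENNReal.ofReal ((q ⬝ᵥ ((Fin.consEquiv fun _ : Fin (r+1) => ℝ) p)) ^ (2 * m))
              = ENNReal.ofReal ((q 0 * p.1 + qt ⬝ᵥ p.2) ^ (2 * m)) := fun p => by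
          rw [show ((Fin.consEquiv fun _ : Fin (r+1) => ℝ) p)
            = Fin.cons p.1 p.2 from rfl, hdot]
        simp_rw [hcons]
        exact lintegral_prod _ meas_inner.aemeasurable
      -- step 2 : symmetrize
      have hsym : ∫⁻ a, G a ∂(bgLaw θ 1) = ∫⁻ a, G (-a) ∂(bgLaw θ 1) := by
        conv_lhs => rw [← bg_symm (θ := θ)]
        rw [lintegral_map hGmeas measurable_neg]
      have h2L : 2 * ∫⁻ a, G a ∂(bgLaw θ 1)
          = ∫⁻ a, (G a + G (-a)) ∂(bgLaw θ 1) := by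
        rw [lintegral_add_left hGmeas, ← hsym, two_mul]
      -- step 3 : per-a expansion
      have hGG : ∀ a : ℝ, G a + G (-a)
          = 2 * ∑ k ∈ Finset.range (m + 1), (Nat.choose (2 * m) (2 * k) : ℝ≥0∞)
              * I (m - k) * ENNReal.ofReal ((q 0 * a) ^ (2 * k)) := by
        intro a
        have meas1 : Measurable fun y : Fin r → ℝ =>
            ENNReal.ofReal ((q 0 * a + qt ⬝ᵥ y) ^ (2 * m)) :=
          ENNReal.measurable_ofReal.comp ((meas_dotr.const_add _).pow_const _)
        have hpt : ∀ y : Fin r → ℝ,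
            ENNReal.ofReal ((q 0 * a + qt ⬝ᵥ y) ^ (2 * m))
              + ENNReal.ofReal ((q 0 * -a + qt ⬝ᵥ y) ^ (2 * m))
            = ∑ k ∈ Finset.range (m + 1), (2 * ((Nat.choose (2 * m) (2 * k) : ℝ≥0∞)
                * ENNReal.ofReal ((q 0 * a) ^ (2 * k))))
                * ENNReal.ofReal ((qt ⬝ᵥ y) ^ (2 * (m - k))) := by
          intro y
          rw [← ENNReal.ofReal_add (ep_nonneg _ _) (ep_nonneg _ _)]
          rw [show q 0 * -a + qt ⬝ᵥ y = qt ⬝ᵥ y - q 0 * a by ring]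
          rw [even_binom m hm4 (qt ⬝ᵥ y) (q 0 * a)]
          rw [ENNReal.ofReal_mul (by norm_num : (0:ℝ) ≤ 2)]
          rw [ENNReal.ofReal_sum_of_nonneg (fun k _ => by
            have h1 := ep_nonneg (qt ⬝ᵥ y) (m - k)
            have h2 := ep_nonneg (q 0 * a) k
            positivity)]
          rw [Finset.mul_sum]
          apply Finset.sum_congr rfl
          intro k _
          rw [ENNReal.ofReal_mul (by
            have := ep_nonneg (qt ⬝ᵥ y) (m - k); positivity),
            ENNReal.ofReal_mul (by positivity), ENNReal.ofReal_natCast]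
          have h2' : ENNReal.ofReal 2 = 2 := by norm_num
          rw [h2']
          ring
        calc G a + G (-a)
            = ∫⁻ y, (ENNReal.ofReal ((q 0 * a + qt ⬝ᵥ y) ^ (2 * m))
                + ENNReal.ofReal ((q 0 * -a + qt ⬝ᵥ y) ^ (2 * m))) ∂(bgVec r θ 1) := by
              rw [hG]
              exact (lintegral_add_left meas1 _).symm
          _ = ∑ k ∈ Finset.range (m + 1), (2 * ((Nat.choose (2 * m) (2 * k) : ℝ≥0∞)
                * ENNReal.ofReal ((q 0 * a) ^ (2 * k)))) * I (m - k) := by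
              simp_rw [hpt]
              rw [lintegral_finset_sum _ (fun k _ => ((measS _).const_mul _))]
              apply Finset.sum_congr rfl
              intro k _
              rw [lintegral_const_mul _ (measS (2 * (m - k)))]
          _ = 2 * ∑ k ∈ Finset.range (m + 1), (Nat.choose (2 * m) (2 * k) : ℝ≥0∞)
                * I (m - k) * ENNReal.ofReal ((q 0 * a) ^ (2 * k)) := by
              rw [Finset.mul_sum]
              apply Finset.sum_congr rfl
              intro k _
              ring
      -- step 4 : integrate over a
      have hsum : 2 * ∫⁻ a, G a ∂(bgLaw θ 1)
          = 2 * ∑ k ∈ Finset.range (m + 1), (Nat.choose (2 * m) (2 * k) : ℝ≥0∞)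
              * I (m - k) * J k := by
        rw [h2L]
        simp_rw [hGG]
        have measSum : Measurable fun a : ℝ => ∑ k ∈ Finset.range (m + 1),
            (Nat.choose (2 * m) (2 * k) : ℝ≥0∞) * I (m - k)
              * ENNReal.ofReal ((q 0 * a) ^ (2 * k)) :=
          Finset.measurable_sum _ fun k _ => (measA (2 * k)).const_mul _
        rw [lintegral_const_mul _ measSum]
        congr 1
        rw [lintegral_finset_sum _ (fun k _ => (measA (2 * k)).const_mul _)]
        apply Finset.sum_congr rfl
        intro k _
        rw [lintegral_const_mul _ (measA (2 * k))]
      -- bounds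
      have hθ'le : θ' ≤ 1 := by rw [hθ']; exact ENNReal.ofReal_le_one.mpr h1
      have hJ0 : J 0 = 1 := by
        rw [hJ]
        simp only [mul_zero, pow_zero, ENNReal.ofReal_one]
        simp [measure_univ]
      have hIbound : ∀ j : ℕ, j ≤ 4 → I j ≤ cstN j * T ^ j := by
        intro j hj
        rcases Nat.eq_zero_or_pos j with hj0 | hj1
        · subst hj0
          rw [hI]
          simp only [mul_zero, pow_zero, ENNReal.ofReal_one]
          simp [measure_univ, cstN]
        · calc I j ≤ cstN j * θ' * T ^ j := ih qt j hj1 hj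
            _ ≤ cstN j * 1 * T ^ j := by gcongr
            _ = cstN j * T ^ j := by rw [mul_one]
      have hIm : I m ≤ cstN m * θ' * T ^ m := ih qt m hm1 hm4
      have hJbound : ∀ k : ℕ, 1 ≤ k → k ≤ 4 → J k ≤ Q ^ k * (θ' * M) := by
        intro k hk1 hk4
        rw [hJ, hQ, hθ', hM]
        exact bg_moment h0.le k hk1 hk4 (q 0)
      have hQTm : ENNReal.ofReal (∑ i, q i ^ 2) = Q + T := by
        rw [hQ, hT, Fin.sum_univ_succ,
          ENNReal.ofReal_add (sq_nonneg _) (Finset.sum_nonneg fun _ _ => sq_nonneg _)]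
      have hfirst : (Nat.choose (2 * m) (2 * 0) : ℝ≥0∞) * I (m - 0) * J 0
          ≤ cstN m * θ' * (Q ^ 0 * T ^ (m - 0) * (Nat.choose m 0 : ℝ≥0∞)) := by
        rw [hJ0, mul_one]
        simp only [Nat.mul_zero, Nat.choose_zero_right, Nat.cast_one, one_mul,
          Nat.sub_zero, pow_zero, mul_one]
        exact hIm
      have hrest : ∀ i ∈ Finset.range m,
          (Nat.choose (2 * m) (2 * (i + 1)) : ℝ≥0∞) * I (m - (i + 1)) * J (i + 1)
            ≤ cstN m * θ'
              * (Q ^ (i + 1) * T ^ (m - (i + 1)) * (Nat.choose m (i + 1) : ℝ≥0∞)) := by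
        intro i hi
        have hik : i + 1 ≤ m := Nat.succ_le_of_lt (Finset.mem_range.mp hi)
        have hik4 : i + 1 ≤ 4 := le_trans hik hm4
        calc (Nat.choose (2 * m) (2 * (i + 1)) : ℝ≥0∞) * I (m - (i + 1)) * J (i + 1)
            ≤ (Nat.choose (2 * m) (2 * (i + 1)) : ℝ≥0∞)
                * (cstN (m - (i + 1)) * T ^ (m - (i + 1)))
                * (Q ^ (i + 1) * (θ' * M)) :=
              mul_le_mul' (mul_le_mul' le_rfl
                (hIbound _ (le_trans (Nat.sub_le _ _) hm4)))
                (hJbound _ (Nat.le_add_left _ _) hik4)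
          _ = ((Nat.choose (2 * m) (2 * (i + 1)) : ℝ≥0∞) * cstN (m - (i + 1)) * M)
                * (T ^ (m - (i + 1)) * Q ^ (i + 1) * θ') := by ring
          _ ≤ (cstN m * (Nat.choose m (i + 1) : ℝ≥0∞))
                * (T ^ (m - (i + 1)) * Q ^ (i + 1) * θ') := by
              apply mul_le_mul_left
              rw [hM]
              exact cst_num (Nat.le_add_left _ _) hik hm4
          _ = cstN m * θ'
                * (Q ^ (i + 1) * T ^ (m - (i + 1)) * (Nat.choose m (i + 1) : ℝ≥0∞)) := by
              ring
      have hSig : ∑ k ∈ Finset.range (m + 1), (Nat.choose (2 * m) (2 * k) : ℝ≥0∞)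
            * I (m - k) * J k
          ≤ cstN m * θ' * (Q + T) ^ m := by
        conv_lhs => rw [Finset.sum_range_succ' _ m]
        conv_rhs => rw [add_pow Q T m, Finset.sum_range_succ' _ m]
        rw [mul_add, Finset.mul_sum]
        exact add_le_add (Finset.sum_le_sum hrest) hfirst
      -- conclude
      rw [hL1, hQTm]
      have h2 : 2 * ∫⁻ a, G a ∂(bgLaw θ 1) ≤ 2 * (cstN m * θ' * (Q + T) ^ m) := by
        rw [hsum]
        exact mul_le_mul_right hSig 2
      exact (ENNReal.mul_le_mul_iff_right (by norm_num) (by norm_num)).mp h2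


end BGaux



theorem stmt19 : ∃ C : ℝ, 0 < C ∧
    ∀ (r : ℕ) (θ : ℝ), 1 ≤ r → 0 < θ → θ ≤ 1 →
    ∀ q : Fin r → ℝ, l2sq q = 1 →
      (∫ x : Fin r → ℝ, ((1/(12*θ)) * (q ⬝ᵥ x)^4)^2 ∂(bgVec r θ 1)) ≤ C/θ ∧
      (∫ x : Fin r → ℝ, (q ⬝ᵥ x)^8 ∂(bgVec r θ 1)) ≤ 144 * C * θ := by
  refine ⟨(76800000 : ℝ) ^ 4 / 144, by norm_num, ?_⟩
  intro r θ _ h0 h1 q hq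
  have hq' : (∑ i, q i ^ 2) = 1 := hq
  have hmeas : Measurable fun x : Fin r → ℝ => q ⬝ᵥ x :=
    Finset.measurable_sum Finset.univ fun i _ => (measurable_pi_apply i : Measurable fun y : Fin r → ℝ => y i).const_mul (q i)
  have hkey := BGaux.key h0 h1 r q 4 (by norm_num) (by norm_num)
  rw [hq'] at hkey
  simp only [ENNReal.ofReal_one, one_pow, mul_one] at hkey
  have hcst : BGaux.cstN 4 * ENNReal.ofReal θ = ENNReal.ofReal ((76800000 : ℝ) ^ 4 * θ) := by
    rw [BGaux.cstN, show (((76800000 ^ 4 : ℕ) : ℝ≥0∞)) = ENNReal.ofReal ((76800000 : ℝ) ^ 4) by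
      rw [show ((76800000 : ℝ) ^ 4) = (((76800000 ^ 4 : ℕ) : ℝ)) by norm_num,
        ENNReal.ofReal_natCast], ← ENNReal.ofReal_mul (by positivity)]
  rw [hcst] at hkey
  have h28 : (2 * 4 : ℕ) = 8 := rfl
  rw [h28] at hkey
  have heq : ∫ x, (q ⬝ᵥ x) ^ 8 ∂(bgVec r θ 1)
      = (∫⁻ x, ENNReal.ofReal ((q ⬝ᵥ x) ^ 8) ∂(bgVec r θ 1)).toReal :=
    integral_eq_lintegral_of_nonneg_ae (ae_of_all _ fun x => by positivity)
      (hmeas.pow_const 8).aestronglyMeasurable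
  have hbound : ∫ x, (q ⬝ᵥ x) ^ 8 ∂(bgVec r θ 1) ≤ (76800000 : ℝ) ^ 4 * θ := by
    rw [heq]
    calc (∫⁻ x, ENNReal.ofReal ((q ⬝ᵥ x) ^ 8) ∂(bgVec r θ 1)).toReal
        ≤ (ENNReal.ofReal ((76800000 : ℝ) ^ 4 * θ)).toReal :=
          ENNReal.toReal_mono ENNReal.ofReal_ne_top hkey
      _ = (76800000 : ℝ) ^ 4 * θ := ENNReal.toReal_ofReal (by positivity)
  constructor
  · have hfun : (fun x : Fin r → ℝ => ((1 / (12 * θ)) * (q ⬝ᵥ x) ^ 4) ^ 2)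
        = fun x : Fin r → ℝ => (1 / (12 * θ)) ^ 2 • ((q ⬝ᵥ x) ^ 8) := funext fun x => by
      simp only [smul_eq_mul]; ring
    rw [hfun, integral_smul, smul_eq_mul]
    have hnn : (0 : ℝ) ≤ (1 / (12 * θ)) ^ 2 := by positivity
    calc (1 / (12 * θ)) ^ 2 * ∫ x, (q ⬝ᵥ x) ^ 8 ∂(bgVec r θ 1)
        ≤ (1 / (12 * θ)) ^ 2 * ((76800000 : ℝ) ^ 4 * θ) :=
          mul_le_mul_of_nonneg_left hbound hnn
      _ = (76800000 : ℝ) ^ 4 / 144 / θ := by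
          field_simp
          ring
  · calc ∫ x, (q ⬝ᵥ x) ^ 8 ∂(bgVec r θ 1) ≤ (76800000 : ℝ) ^ 4 * θ := hbound
      _ = 144 * ((76800000 : ℝ) ^ 4 / 144) * θ := by ring


end
end
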